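/- Let A be a Stone topological L-algebra. Then A is residually finite (i.e., profinite) if and only if the set {f : C(A, A) | the underlying function of f belongs to M(A)} has compact closure in the space C(A, A) of continuous self-maps of A equipped with the compact-open topology. -/

import Mathlib

open FirstOrder Language Structure

/-- An elementary translation of an `L`-algebra `A`. -/
def IsElemTranslation (L : FirstOrder.Language) {A : Type*} [L.Structure A]
    (g : Function.End A) : Prop :=
  ∃ (n : ℕ) (f : L.Functions n) (i : Fin n) (v : Fin n → A),
    g = fun a => funMap f (Function.update v i a)

/-- The translation monoid `M(A)`. -/
def translationMonoid (L : FirstOrder.Language) (A : Type*) [L.Structure A] :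
    Submonoid (Function.End A) :=
  Submonoid.closure {g | IsElemTranslation L g}

/-- The syntactic congruence of `K ⊆ A`. -/
def syntCong (L : FirstOrder.Language) {A : Type*} [L.Structure A] (K : Set A)
    (a b : A) : Prop :=
  ∀ g ∈ translationMonoid L A, (g a ∈ K ↔ g b ∈ K)

/-- Residual finiteness of a topological `L`-algebra. -/
def ResiduallyFinite (L : FirstOrder.Language) (A : Type*) [TopologicalSpace A]
    [L.Structure A] : Prop :=
  ∀ a b : A, a ≠ b →
    ∃ (F : Type) (_ : Finite F) (iT : TopologicalSpace F) (iS : L.Structure F),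
      letI := iT; letI := iS;
      DiscreteTopology F ∧ ∃ φ : A →[L] F, Continuous (φ : A → F) ∧ φ a ≠ φ b

lemma continuous_of_mem_translationMonoid {L : FirstOrder.Language} {A : Type*}
    [TopologicalSpace A] [L.Structure A]
    (hA : ∀ (n : ℕ) (f : L.Functions n), Continuous fun v : Fin n → A => funMap f v)
    {g : Function.End A} (hg : g ∈ translationMonoid L A) : Continuous g := by
  induction hg using Submonoid.closure_induction with
  | mem x hx =>
    obtain ⟨n, f, i, v, rfl⟩ := hx
    refine (hA n f).comp (continuous_pi fun j => ?_)
    by_cases h : j = i <;> simp [Function.update_apply, h] <;> fun_prop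
  | one => exact continuous_id
  | mul x y hx hy ihx ihy => exact ihx.comp ihy

lemma hom_comm {L : FirstOrder.Language} {A B : Type*} [L.Structure A] [L.Structure B]
    (φ : A → B) (hφ : ∀ {n : ℕ} (f : L.Functions n) (x : Fin n → A),
      φ (funMap f x) = funMap f (φ ∘ x))
    {g : Function.End A} (hg : g ∈ translationMonoid L A) :
    ∀ x y : A, φ x = φ y → φ (g x) = φ (g y) := by
  induction hg using Submonoid.closure_induction with
  | mem x hx =>
    obtain ⟨n, f, i, v, rfl⟩ := hx
    intro x y hxy
    simp only [hφ, Function.comp_update]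
    rw [hxy]
  | one => exact fun x y h => h
  | mul x y hx hy ihx ihy => exact fun a b h => ihx _ _ (ihy a b h)

lemma syntCong_refl {L : FirstOrder.Language} {A : Type*} [L.Structure A] (K : Set A) (a : A) :
    syntCong L K a a := fun _ _ => Iff.rfl

lemma syntCong_symm {L : FirstOrder.Language} {A : Type*} [L.Structure A] {K : Set A} {a b : A}
    (h : syntCong L K a b) : syntCong L K b a := fun g hg => (h g hg).symm

lemma syntCong_trans {L : FirstOrder.Language} {A : Type*} [L.Structure A] {K : Set A} {a b c : A}
    (h : syntCong L K a b) (h' : syntCong L K b c) : syntCong L K a c :=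
  fun g hg => (h g hg).trans (h' g hg)

lemma syntCong_update {L : FirstOrder.Language} {A : Type*} [L.Structure A] {K : Set A}
    {n : ℕ} (f : L.Functions n) (u : Fin n → A) (i : Fin n) {a b : A}
    (hab : syntCong L K a b) :
    syntCong L K (funMap f (Function.update u i a)) (funMap f (Function.update u i b)) := by
  intro g hg
  have ht : (show Function.End A from fun c => funMap f (Function.update u i c))
      ∈ translationMonoid L A :=
    Submonoid.subset_closure ⟨n, f, i, u, rfl⟩
  exact hab (g * (show Function.End A from fun c => funMap f (Function.update u i c)))
    (mul_mem hg ht)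

lemma syntCong_funMap {L : FirstOrder.Language} {A : Type*} [L.Structure A] {K : Set A}
    {n : ℕ} (f : L.Functions n) {v w : Fin n → A}
    (h : ∀ i, syntCong L K (v i) (w i)) : syntCong L K (funMap f v) (funMap f w) := by
  have main : ∀ s : Finset (Fin n),
      syntCong L K (funMap f v) (funMap f (fun i => if i ∈ s then w i else v i)) := by
    intro s
    induction s using Finset.induction_on with
    | empty => simpa using syntCong_refl K _
    | @insert j s hj ih =>
      refine syntCong_trans ih ?_
      have h1 : (fun i => if i ∈ s then w i else v i)
          = Function.update (fun i => if i ∈ s then w i else v i) j (v j) := by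
        funext i
        rcases eq_or_ne i j with rfl | hij
        · simp [hj]
        · simp [Function.update_apply, hij]
      have h2 : (fun i => if i ∈ insert j s then w i else v i)
          = Function.update (fun i => if i ∈ s then w i else v i) j (w j) := by
        funext i
        rcases eq_or_ne i j with rfl | hij
        · simp
        · simp [Function.update_apply, hij]
      rw [h1, h2]  -- careful: h1 rewrites also inside h2's rhs? do conv
      exact syntCong_update f _ j (h j)
  simpa using main Finset.univ

/-- Bundled data of a finite quotient-like map with open fibers. -/
structure FinQuot (L : FirstOrder.Language) (A : Type*) [TopologicalSpace A] [L.Structure A] where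
  F : Type
  finite : Finite F
  iS : L.Structure F
  φ : A → F
  map_fun' : ∀ {n : ℕ} (f : L.Functions n) (x : Fin n → A),
    φ (funMap f x) = @funMap L F iS n f (φ ∘ x)
  openFiber : ∀ c : F, IsOpen (φ ⁻¹' {c})

/-- Pi structure on a (dependent) product of `L`-structures, with trivial relations. -/
def piStruct (L : FirstOrder.Language) {J : Type*} (F : J → Type*)
    (iS : ∀ j, L.Structure (F j)) : L.Structure (∀ j, F j) where
  funMap {n} f v := fun j => @funMap L (F j) (iS j) n f (fun i => v i j)
  RelMap _ _ := True

lemma finQuot_of_openClass {L : FirstOrder.Language} {A : Type*} [TopologicalSpace A]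
    [L.Structure A] [CompactSpace A] (K : Set A)
    (hop : ∀ z : A, ∃ N ∈ nhds z, ∀ y ∈ N, syntCong L K z y) :
    ∃ q : FinQuot L A, (∀ {n : ℕ} (r : L.Relations n) (x : Fin n → q.F), @RelMap L q.F q.iS n r x)
      ∧ ∀ a b : A, q.φ a = q.φ b → syntCong L K a b := by
  classical
  set r : Setoid A := ⟨syntCong L K,
    ⟨syntCong_refl K, fun h => syntCong_symm h, fun h h' => syntCong_trans h h'⟩⟩ with hr
  -- fibers of the quotient map are open
  have fiberopen : ∀ q : Quotient r, IsOpen {y : A | Quotient.mk r y = q} := by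
    intro q
    rw [isOpen_iff_mem_nhds]
    intro z hz
    obtain ⟨N, hN, hNsub⟩ := hop z
    refine Filter.mem_of_superset hN fun y hy => ?_
    have : Quotient.mk r y = Quotient.mk r z := (Quotient.sound (Setoid.symm (hNsub y hy)))
    simpa [this] using hz
  -- finitely many classes
  have hcov : (Set.univ : Set A) ⊆ ⋃ q : Quotient r, {y : A | Quotient.mk r y = q} :=
    fun z _ => Set.mem_iUnion.2 ⟨Quotient.mk r z, rfl⟩
  obtain ⟨t, ht⟩ := isCompact_univ.elim_finite_subcover _ fiberopen hcov
  have hfinQ : Finite (Quotient r) := by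
    have hall : ∀ q : Quotient r, q ∈ t := by
      intro q
      induction q using Quotient.ind with
      | _ z =>
        have := ht (Set.mem_univ z)
        simp only [Set.mem_iUnion] at this
        obtain ⟨q', hq', hzq'⟩ := this
        rwa [show Quotient.mk r z = q' from hzq']
    exact Finite.of_injective (fun q => (⟨q, hall q⟩ : {x // x ∈ t}))
      (fun a b h => by simpa using congrArg Subtype.val h)
  -- structure on the quotient
  letI iQ : L.Structure (Quotient r) :=
    { funMap := fun {n} f v => Quotient.mk r (funMap f (fun i => (v i).out))
      RelMap := fun _ _ => True }
  have hmapfun : ∀ {n : ℕ} (f : L.Functions n) (x : Fin n → A),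
      Quotient.mk r (funMap f x) = funMap f (fun i => Quotient.mk r (x i)) := by
    intro n f x
    refine Quotient.sound ?_
    exact syntCong_funMap f (fun i => Setoid.symm (Quotient.mk_out (x i)))
  -- transfer to `Fin m`
  obtain ⟨m, ⟨e⟩⟩ := Finite.exists_equiv_fin (Quotient r)
  letI iF : L.Structure (Fin m) :=
    { funMap := fun {n} f v => e (funMap f (fun i => e.symm (v i)))
      RelMap := fun _ _ => True }
  refine ⟨⟨Fin m, inferInstance, iF, fun a => e (Quotient.mk r a), ?_, ?_⟩, fun _ _ => trivial, ?_⟩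
  · intro n f x
    show e (Quotient.mk r (funMap f x)) = e (funMap f (fun i => e.symm (e (Quotient.mk r (x i)))))
    simp [hmapfun]
  · intro c
    have h1 : (fun a => e (Quotient.mk r a)) ⁻¹' {c} = {y : A | Quotient.mk r y = e.symm c} := by
      ext a
      simp [Equiv.apply_eq_iff_eq_symm_apply]
    rw [h1]
    exact fiberopen _
  · intro a b hab
    have : Quotient.mk r a = Quotient.mk r b := e.injective hab
    exact Quotient.exact this

lemma residuallyFinite_of_isCompact_closure (L : FirstOrder.Language) {A : Type*}
    [TopologicalSpace A] [L.Structure A]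
    [CompactSpace A] [T2Space A] [TotallyDisconnectedSpace A]
    (hA : ∀ (n : ℕ) (f : L.Functions n), Continuous fun v : Fin n → A => funMap f v)
    (hc : IsCompact (closure {f : C(A, A) | (⇑f : Function.End A) ∈ translationMonoid L A})) :
    ResiduallyFinite L A := by
  classical
  letI : UniformSpace A := uniformSpaceOfCompactR1
  set S := {f : C(A, A) | (⇑f : Function.End A) ∈ translationMonoid L A} with hS
  intro a b hab
  -- a clopen set separating a and b
  haveI : TotallySeparatedSpace A := loc_compact_t2_tot_disc_iff_tot_sep.mp inferInstance
  obtain ⟨K, hK, haK, hbK⟩ := exists_isClopen_of_totally_separated hab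
  -- the basic entourage associated to `K`
  have hUK : {p : A × A | p.1 ∈ K ↔ p.2 ∈ K} ∈ uniformity A := by
    rw [← nhdsSet_diagonal_eq_uniformity]
    have hopen : IsOpen {p : A × A | p.1 ∈ K ↔ p.2 ∈ K} := by
      have : {p : A × A | p.1 ∈ K ↔ p.2 ∈ K} = (K ×ˢ K) ∪ (Kᶜ ×ˢ Kᶜ) := by
        ext p
        by_cases h1 : p.1 ∈ K <;> by_cases h2 : p.2 ∈ K <;>
          simp [Set.mem_prod, h1, h2]
      rw [this]
      exact (hK.2.prod hK.2).union (hK.compl.2.prod hK.compl.2)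
    exact hopen.mem_nhdsSet.mpr (fun p hp => by
      simp [Set.mem_setOf_eq, show p.1 = p.2 from hp])
  -- uniform continuity of evaluation on (closure S) × univ
  have hev : ContinuousOn (fun p : C(A, A) × A => p.1 p.2) (closure S ×ˢ Set.univ) :=
    continuous_eval.continuousOn
  have huc := ((hc.prod isCompact_univ).uniformContinuousOn_of_continuous hev)
  have hmem := huc hUK
  rw [Filter.mem_map, Filter.mem_inf_iff_superset] at hmem
  obtain ⟨E, hE, P, hP, hEP⟩ := hmem
  rw [uniformity_prod_eq_prod, Filter.mem_map, Filter.mem_prod_iff] at hE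
  obtain ⟨u, hu, v, hv, huv⟩ := hE
  -- the syntactic classes are open
  have hop : ∀ z : A, ∃ N ∈ nhds z, ∀ y ∈ N, syntCong L K z y := by
    intro z
    refine ⟨UniformSpace.ball z v, UniformSpace.ball_mem_nhds z hv, fun y hy g hg => ?_⟩
    have hcont : Continuous g := continuous_of_mem_translationMonoid hA hg
    have hgS : (⟨g, hcont⟩ : C(A, A)) ∈ closure S := subset_closure hg
    have h1 : (((⟨g, hcont⟩ : C(A, A)), ((⟨g, hcont⟩ : C(A, A)))), (z, y)) ∈ u ×ˢ v :=
      ⟨refl_mem_uniformity hu, hy⟩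
    have h2 := huv h1
    have h3 : (((⟨g, hcont⟩ : C(A, A)), z), ((⟨g, hcont⟩ : C(A, A)), y)) ∈
        E ∩ ((closure S ×ˢ Set.univ) ×ˢ (closure S ×ˢ Set.univ)) :=
      ⟨h2, ⟨⟨hgS, Set.mem_univ _⟩, ⟨hgS, Set.mem_univ _⟩⟩⟩
    have h4 := hEP (Set.mem_inter h3.1 (hP h3.2))
    exact h4
  obtain ⟨q, hqrel, hqcong⟩ := finQuot_of_openClass K hop
  haveI := q.finite
  letI : TopologicalSpace q.F := ⊥
  letI : L.Structure q.F := q.iS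
  haveI : DiscreteTopology q.F := ⟨rfl⟩
  have hφcont : Continuous q.φ := by
    rw [continuous_def]
    intro s _
    have h2 : q.φ ⁻¹' s = ⋃ c ∈ s, q.φ ⁻¹' {c} := by ext x; simp
    rw [h2]
    exact isOpen_biUnion fun c _ => q.openFiber c
  refine ⟨q.F, inferInstance, inferInstance, q.iS, ⟨rfl⟩,
    ⟨q.φ, q.map_fun', fun r x _ => hqrel r _⟩, hφcont, ?_⟩
  intro h
  have hcong := hqcong a b h
  have := hcong 1 (one_mem _)
  change (a ∈ K ↔ b ∈ K) at this
  exact hbK (by simpa [haK] using this.mp haK) |>.elim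

lemma isCompact_closure_of_residuallyFinite (L : FirstOrder.Language) {A : Type*}
    [TopologicalSpace A] [L.Structure A]
    [CompactSpace A] [T2Space A] [TotallyDisconnectedSpace A]
    (hA : ∀ (n : ℕ) (f : L.Functions n), Continuous fun v : Fin n → A => funMap f v)
    (h : ResiduallyFinite L A) :
    IsCompact (closure {f : C(A, A) | (⇑f : Function.End A) ∈ translationMonoid L A}) := by
  classical
  letI : UniformSpace A := uniformSpaceOfCompactR1
  set S := {f : C(A, A) | (⇑f : Function.End A) ∈ translationMonoid L A} with hS
  -- key: entourages are refined by fibers of finite quotients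
  have key : ∀ U ∈ uniformity A, ∃ q : FinQuot L A, ∀ x y : A, q.φ x = q.φ y → (x, y) ∈ U := by
    intro U hU
    obtain ⟨V, hV, hVsymm, hVU⟩ := comp_symm_mem_uniformity_sets hU
    have hC : ∀ a : A, ∃ C : Set A, IsClopen C ∧ a ∈ C ∧ C ⊆ UniformSpace.ball a V := by
      intro a
      obtain ⟨C, hC1, hC2, hC3⟩ := compact_exists_isClopen_in_isOpen isOpen_interior
        (mem_interior_iff_mem_nhds.2 (UniformSpace.ball_mem_nhds a hV))
      exact ⟨C, hC1, hC2, hC3.trans interior_subset⟩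
    choose C hCclopen hCmem hCball using hC
    obtain ⟨t, ht⟩ := isCompact_univ.elim_finite_subcover (fun a => C a)
      (fun a => (hCclopen a).2) (fun z _ => Set.mem_iUnion.2 ⟨z, hCmem z⟩)
    have hW : ∀ x y : A, (∃ a ∈ t, x ∈ C a ∧ y ∈ C a) → (x, y) ∈ U := by
      rintro x y ⟨a, -, hx, hy⟩
      exact hVU (SetRel.prodMk_mem_comp (SetRel.symm V (hCball a hx)) (hCball a hy))
    set T : Set (A × A) := {p | ∀ a ∈ t, ¬(p.1 ∈ C a ∧ p.2 ∈ C a)} with hT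
    have hTclosed : IsClosed T := by
      have hTeq : T = ⋂ a ∈ t, ((C a ×ˢ C a : Set (A × A))ᶜ) := by
        ext p; simp [hT, Set.mem_prod]
      rw [hTeq]
      exact isClosed_biInter fun a _ =>
        (((hCclopen a).2).prod ((hCclopen a).2)).isClosed_compl
    have hTne : ∀ p : A × A, p ∈ T → p.1 ≠ p.2 := by
      intro p hp heq
      have := ht (Set.mem_univ p.1)
      simp only [Set.mem_iUnion] at this
      obtain ⟨a, ha, hxa⟩ := this
      exact hp a ha ⟨hxa, heq ▸ hxa⟩
    have hTsub : T ⊆ ⋃ q : FinQuot L A, {p : A × A | q.φ p.1 ≠ q.φ p.2} := by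
      intro p hp
      obtain ⟨F, hF, iT, iS, hd, φ, hφc, hφab⟩ := h p.1 p.2 (hTne p hp)
      refine Set.mem_iUnion.2 ⟨⟨F, hF, iS, ⇑φ, fun f x => φ.map_fun f x, ?_⟩, hφab⟩
      intro c
      exact (isOpen_discrete ({c} : Set F)).preimage hφc
    have hWopen : ∀ q : FinQuot L A, IsOpen {p : A × A | q.φ p.1 ≠ q.φ p.2} := by
      intro q
      rw [isOpen_iff_mem_nhds]
      intro p hp
      have hopen := (q.openFiber (q.φ p.1)).prod (q.openFiber (q.φ p.2))
      have hmem : p ∈ (q.φ ⁻¹' {q.φ p.1}) ×ˢ (q.φ ⁻¹' {q.φ p.2}) := ⟨rfl, rfl⟩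
      refine Filter.mem_of_superset (hopen.mem_nhds hmem) fun z hz => ?_
      have h1 : q.φ z.1 = q.φ p.1 := hz.1
      have h2 : q.φ z.2 = q.φ p.2 := hz.2
      simpa only [Set.mem_setOf_eq, h1, h2] using hp
    obtain ⟨t', ht'⟩ := (hTclosed.isCompact).elim_finite_subcover _ hWopen hTsub
    set m := t'.card with hm
    set ψ : Fin m → FinQuot L A := fun i => (t'.equivFin.symm i : FinQuot L A) with hψ
    haveI : ∀ i, Finite (ψ i).F := fun i => (ψ i).finite
    letI iS' : L.Structure (∀ i : Fin m, (ψ i).F) := piStruct L _ (fun i => (ψ i).iS)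
    refine ⟨⟨∀ i : Fin m, (ψ i).F, inferInstance, iS', fun a i => (ψ i).φ a, ?_, ?_⟩, ?_⟩
    · intro n f x
      funext i
      exact (ψ i).map_fun' f x
    · intro c
      have hfib : (fun a i => (ψ i).φ a) ⁻¹' {c} = ⋂ i, (ψ i).φ ⁻¹' {c i} := by
        ext a; simp [funext_iff]
      rw [hfib]
      exact isOpen_iInter_of_finite fun i => (ψ i).openFiber _
    · intro x y hxy
      by_cases hxyT : (x, y) ∈ T
      · exfalso
        obtain ⟨q, hq, hmem⟩ := Set.mem_iUnion₂.1 (ht' hxyT)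
        have hi : ψ (t'.equivFin ⟨q, hq⟩) = q := by simp [hψ]
        have := congrFun hxy (t'.equivFin ⟨q, hq⟩)
        rw [← hi] at hmem
        exact hmem this
      · simp only [hT, Set.mem_setOf_eq, not_forall] at hxyT
        obtain ⟨a, ha, hxa⟩ := hxyT
        exact hW x y ⟨a, ha, not_not.1 hxa⟩
  -- equicontinuity
  have heq : Equicontinuous (fun f : {f : C(A, A) // f ∈ S} => ((f : C(A, A)) : A → A)) := by
    intro x U hU
    obtain ⟨q, hq⟩ := key U hU
    have hN : q.φ ⁻¹' {q.φ x} ∈ nhds x := (q.openFiber _).mem_nhds rfl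
    refine Filter.eventually_of_mem hN fun y hy i => ?_
    refine hq _ _ ?_
    exact @hom_comm L A q.F _ q.iS q.φ (fun f x => q.map_fun' f x) _ i.2 x y
      (show q.φ x = q.φ y from (hy : q.φ y = q.φ x).symm)
  -- Arzela-Ascoli
  have hclemb : Topology.IsClosedEmbedding
      ((UniformOnFun.ofFun {K : Set A | IsCompact K}) ∘ (fun f : C(A, A) => ⇑f)) := by
    have h1 := ContinuousMap.isUniformEmbedding_toUniformOnFunIsCompact (α := A) (β := A)
    refine ⟨h1.isEmbedding, ?_⟩
    rw [show Set.range ((UniformOnFun.ofFun {K : Set A | IsCompact K}) ∘ (fun f : C(A, A) => ⇑f))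
        = _ from ContinuousMap.range_toUniformOnFunIsCompact]
    exact UniformOnFun.isClosed_setOf_continuous
      (Topology.IsCoherentWith.of_nhds fun x => ⟨Set.univ, isCompact_univ, Filter.univ_mem⟩)
  exact ArzelaAscoli.isCompact_closure_of_isClosedEmbedding (fun K hK => hK) hclemb
    (fun K _ => heq.equicontinuousOn K)
    (fun K _ x _ => ⟨Set.univ, isCompact_univ, fun i _ => trivial⟩)

/-- A Stone topological `L`-algebra is profinite iff its translation monoid is
relatively compact in `C(A, A)` with the compact-open topology. -/
theorem residuallyFinite_iff_relatively_compact (L : FirstOrder.Language) {A : Type*}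
    [TopologicalSpace A] [L.Structure A]
    [CompactSpace A] [T2Space A] [TotallyDisconnectedSpace A]
    (hA : ∀ (n : ℕ) (f : L.Functions n), Continuous fun v : Fin n → A => funMap f v) :
    ResiduallyFinite L A ↔
      IsCompact (closure {f : C(A, A) | (⇑f : Function.End A) ∈ translationMonoid L A}) := by
  constructor
  · exact isCompact_closure_of_residuallyFinite L hA
  · exact residuallyFinite_of_isCompact_closure L hA
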